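/- Let X₁,₁, X₁,₂, X₁,₃, X₁,₄, X₂,₁, X₂,₂ be positive real numbers, and set ρ₃ := L(X₁,₄)·L(X₂,₁)·R(X₁,₃), ρ₄ := R(X₁,₄)·L(X₁,₁)·L(X₂,₂), ρ₅ := L(X₁,₄)·R(X₂,₁)·R(X₁,₂)·L(X₂,₂). Let 𝒦₁ := X₁,₁X₁,₂X₁,₃X₁,₄X₂,₁X₂,₂ and 𝒦₂ := X₂,₁X₂,₂. Then Tr(ρ₃·ρ₄·ρ₅^{-1}) = −√(𝒦₁/𝒦₂)·(1 + 𝒦₂/𝒦₁). (Equation (6.9): the trace of the monodromy around one puncture of the twice-punctured torus is expressed through the Casimirs 𝒦₁, 𝒦₂ of the 𝒜₄-quiver.) -/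

import Mathlib

/-- The left-turn transport matrix `L(t)`. -/
noncomputable def Lmat (t : ℝ) : Matrix (Fin 2) (Fin 2) ℝ :=
  !![Real.sqrt t, Real.sqrt t; 0, (Real.sqrt t)⁻¹]

/-- The right-turn transport matrix `R(t)`. -/
noncomputable def Rmat (t : ℝ) : Matrix (Fin 2) (Fin 2) ℝ :=
  !![Real.sqrt t, 0; (Real.sqrt t)⁻¹, (Real.sqrt t)⁻¹]

/-- Equation (6.9): the trace of the monodromy around one puncture of the
twice-punctured torus is `−√(𝒦₁/𝒦₂)(1 + 𝒦₂/𝒦₁)` where `𝒦₁, 𝒦₂` are the Casimirs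
of the `𝒜₄`-quiver. -/

private lemma inv_of_det_one (A : Matrix (Fin 2) (Fin 2) ℝ) (h : A.det = 1) :
    A⁻¹ = A.adjugate := by
  rw [Matrix.inv_def, h, Ring.inverse_one, one_smul]

set_option maxHeartbeats 2000000 in
theorem stmt_10 (X11 X12 X13 X14 X21 X22 : ℝ)
    (h11 : 0 < X11) (h12 : 0 < X12) (h13 : 0 < X13) (h14 : 0 < X14)
    (h21 : 0 < X21) (h22 : 0 < X22) :
    let ρ3 := Lmat X14 * Lmat X21 * Rmat X13
    let ρ4 := Rmat X14 * Lmat X11 * Lmat X22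
    let ρ5 := Lmat X14 * Rmat X21 * Rmat X12 * Lmat X22
    let K1 := X11 * X12 * X13 * X14 * X21 * X22
    let K2 := X21 * X22
    (ρ3 * ρ4 * ρ5⁻¹).trace = -Real.sqrt (K1 / K2) * (1 + K2 / K1) := by
  intro ρ3 ρ4 ρ5 K1 K2
  simp only [ρ3, ρ4, ρ5, K1, K2, Lmat, Rmat]
  have hsq : Real.sqrt (X11 * X12 * X13 * X14 * X21 * X22 / (X21 * X22))
      = Real.sqrt X11 * Real.sqrt X12 * Real.sqrt X13 * Real.sqrt X14 := by
    rw [show X11 * X12 * X13 * X14 * X21 * X22 / (X21 * X22) = X11 * X12 * X13 * X14 by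
        field_simp,
      Real.sqrt_mul (by positivity), Real.sqrt_mul (by positivity),
      Real.sqrt_mul (by positivity)]
  rw [hsq]
  have e11 : X11 = Real.sqrt X11 * Real.sqrt X11 := (Real.mul_self_sqrt h11.le).symm
  have e12 : X12 = Real.sqrt X12 * Real.sqrt X12 := (Real.mul_self_sqrt h12.le).symm
  have e13 : X13 = Real.sqrt X13 * Real.sqrt X13 := (Real.mul_self_sqrt h13.le).symm
  have e14 : X14 = Real.sqrt X14 * Real.sqrt X14 := (Real.mul_self_sqrt h14.le).symm
  have e21 : X21 = Real.sqrt X21 * Real.sqrt X21 := (Real.mul_self_sqrt h21.le).symm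
  have e22 : X22 = Real.sqrt X22 * Real.sqrt X22 := (Real.mul_self_sqrt h22.le).symm
  rw [show (X11 * X12 * X13 * X14 * X21 * X22 : ℝ)
        = (Real.sqrt X11 * Real.sqrt X11) * (Real.sqrt X12 * Real.sqrt X12)
          * (Real.sqrt X13 * Real.sqrt X13) * (Real.sqrt X14 * Real.sqrt X14)
          * (Real.sqrt X21 * Real.sqrt X21) * (Real.sqrt X22 * Real.sqrt X22) from by
        rw [← e11, ← e12, ← e13, ← e14, ← e21, ← e22],
     show (X21 * X22 : ℝ) = (Real.sqrt X21 * Real.sqrt X21) * (Real.sqrt X22 * Real.sqrt X22)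
       from by rw [← e21, ← e22]]
  have pa := Real.sqrt_pos.mpr h11
  have pb := Real.sqrt_pos.mpr h12
  have pc := Real.sqrt_pos.mpr h13
  have pd := Real.sqrt_pos.mpr h14
  have pe := Real.sqrt_pos.mpr h21
  have pf := Real.sqrt_pos.mpr h22
  clear ρ3 ρ4 ρ5 K1 K2 e11 e12 e13 e14 e21 e22 hsq
  generalize Real.sqrt X11 = a at pa ⊢
  generalize Real.sqrt X12 = b at pb ⊢
  generalize Real.sqrt X13 = c at pc ⊢
  generalize Real.sqrt X14 = d at pd ⊢
  generalize Real.sqrt X21 = e at pe ⊢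
  generalize Real.sqrt X22 = f at pf ⊢
  clear h11 h12 h13 h14 h21 h22
  rw [inv_of_det_one _ (by
    simp only [Matrix.mul_fin_two, Matrix.det_fin_two_of]
    field_simp
    ring)]
  simp only [Matrix.mul_fin_two, Matrix.adjugate_fin_two_of, Matrix.trace_fin_two_of]
  field_simp
  ring
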